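/- arXiv:1805.09685 — 2 statements merged into one kernel-verified Lean document; each statement's English description precedes it below -/
import Mathlib

section
/- Let ω be a weight function with γ(ω) > 1. Then ω satisfies (ω_5) (so ω⋆(s) < ∞ for all s > 0 and (ω⋆)^ι is a weight function on (0,∞)), the function (ω⋆)^ι satisfies (ω_1), and γ(ω) = γ((ω⋆)^ι) + 1 as an equality in [0,+∞]. In particular, if γ(ω) > 2 then (ω⋆)^ι satisfies (ω_snq). -/
open Filter MeasureTheory Set Asymptotics

noncomputable section

/-- A *weight function*: continuous and nondecreasing on `[0,∞)`, vanishing at `0`,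
and tending to `+∞` at `+∞`. -/
structure IsWeightFunction (ω : ℝ → ℝ) : Prop where
  continuousOn : ContinuousOn ω (Set.Ici 0)
  monotoneOn : MonotoneOn ω (Set.Ici 0)
  map_zero : ω 0 = 0
  tendsto_atTop : Filter.Tendsto ω Filter.atTop Filter.atTop

/-- Condition `(P_{ω,γ})`: there is `K > 1` with `limsup_{t→∞} ω(K^γ t)/ω(t) < K`,
expressed through an eventual bound by some `c < K`. -/
def Pcond (ω : ℝ → ℝ) (γ : ℝ) : Prop :=
  ∃ K : ℝ, 1 < K ∧ ∃ c : ℝ, c < K ∧ ∀ᶠ t : ℝ in Filter.atTop, ω (K ^ γ * t) / ω t ≤ c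

/-- The growth index `γ(ω) ∈ [0,+∞]`, with `sup ∅ = 0`. -/
noncomputable def gammaIndex (ω : ℝ → ℝ) : ENNReal :=
  ⨆ γ ∈ {γ : ℝ | 0 < γ ∧ Pcond ω γ}, ENNReal.ofReal γ

/-- Condition `(ω₁)`. -/
def Omega1 (ω : ℝ → ℝ) : Prop :=
  ∃ L : ℝ, 1 ≤ L ∧ ∀ t : ℝ, 0 ≤ t → ω (2 * t) ≤ L * (ω t + 1)

/-- Condition `(ω₃)`: `log t = o(ω t)` as `t → ∞`. -/
def Omega3 (ω : ℝ → ℝ) : Prop :=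
  (fun t : ℝ => Real.log t) =o[Filter.atTop] ω

/-- Condition `(ω₄)`: `t ↦ ω (exp t)` is convex on `ℝ`. -/
def Omega4 (ω : ℝ → ℝ) : Prop :=
  ConvexOn ℝ Set.univ (fun t : ℝ => ω (Real.exp t))

/-- Condition `(ω₅)`: `ω t = o(t)` as `t → ∞`. -/
def Omega5 (ω : ℝ → ℝ) : Prop :=
  ω =o[Filter.atTop] (fun t : ℝ => t)

/-- Condition `(ω_snq)`. -/
def OmegaSnq (ω : ℝ → ℝ) : Prop :=
  ∃ C : ℝ, 0 < C ∧ ∀ y : ℝ, 0 < y →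
    (∫⁻ t in Set.Ioi (1:ℝ), ENNReal.ofReal (ω (y * t) / t ^ 2)) ≤
      ENNReal.ofReal (C * (ω y + 1))

/-- `ω ∈ W₀`: normalized weight function with `(ω₃)` and `(ω₄)`. -/
def InW0 (ω : ℝ → ℝ) : Prop :=
  IsWeightFunction ω ∧ (∀ t ∈ Set.Icc (0:ℝ) 1, ω t = 0) ∧ Omega3 ω ∧ Omega4 ω

/-- The Legendre–Fenchel–Young conjugate `φ*_ω(x) = sup {x y − ω(e^y) : y ≥ 0}`. -/
noncomputable def phiStar (ω : ℝ → ℝ) (x : ℝ) : ℝ :=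
  sSup ((fun y : ℝ => x * y - ω (Real.exp y)) '' Set.Ici 0)

/-- The associated weight matrix `W^l_j = exp((1/l) φ*_ω(l j))`. -/
noncomputable def Wseq (ω : ℝ → ℝ) (l : ℝ) (j : ℕ) : ℝ :=
  Real.exp ((1 / l) * phiStar ω (l * (j : ℝ)))

/-- `w^l_j = W^l_j / j!`. -/
noncomputable def wseq (ω : ℝ → ℝ) (l : ℝ) (j : ℕ) : ℝ :=
  Wseq ω l j / (Nat.factorial j : ℝ)

/-- `h_M(t) = inf_{k ∈ ℕ} M_k t^k`. -/
noncomputable def hFun (M : ℕ → ℝ) (t : ℝ) : ℝ :=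
  ⨅ k : ℕ, M k * t ^ k

/-- The associated function `ω_M(t) = sup_p log (t^p / M_p)` for `t > 0`, `ω_M(0) = 0`. -/
noncomputable def assocWeight (M : ℕ → ℝ) (t : ℝ) : ℝ :=
  if t ≤ 0 then 0 else ⨆ p : ℕ, Real.log (t ^ p / M p)

/-- The upper Legendre conjugate `ω⋆(s) = sup_{t ≥ 0} (ω(t) − s t)`. -/
noncomputable def upperConj (ω : ℝ → ℝ) (s : ℝ) : ℝ :=
  sSup ((fun t : ℝ => ω t - s * t) '' Set.Ici 0)

/-- `(ω⋆)^ι(t) = ω⋆(1/t)` for `t > 0`, with value `0` at `t = 0`. -/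
noncomputable def upperConjIota (ω : ℝ → ℝ) (t : ℝ) : ℝ :=
  if t = 0 then 0 else upperConj ω (1 / t)

/-- The lower Legendre conjugate `(ω^ι)_⋆(t) = inf_{s > 0} (ω(1/s) + t s)`. -/
noncomputable def lowerConjIota (ω : ℝ → ℝ) (t : ℝ) : ℝ :=
  sInf ((fun s : ℝ => ω (1 / s) + t * s) '' Set.Ioi 0)

/-- The unbounded sector `S_γ ⊆ ℂ` of opening `γ π` bisected by direction `0`
(for `0 < γ < 2` it lies in `ℂ`). -/
def sector (γ : ℝ) : Set ℂ :=
  {z : ℂ | z ≠ 0 ∧ |Complex.arg z| < γ * Real.pi / 2}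

/-- `M ∈ LC`: positive, normalized, log-convex, `(M_p)^{1/p} → ∞`. -/
def LCseq (M : ℕ → ℝ) : Prop :=
  (∀ p, 0 < M p) ∧ M 0 = 1 ∧ M 0 ≤ M 1 ∧
  (∀ j : ℕ, 1 ≤ j → M j ^ 2 ≤ M (j - 1) * M (j + 1)) ∧
  Filter.Tendsto (fun p : ℕ => M p ^ ((1 : ℝ) / (p : ℝ))) Filter.atTop Filter.atTop

/-- The partial derivative `∂_i` of a function on `ℝ^d`. -/
noncomputable def partialDeriv {d : ℕ} (i : Fin d)
    (f : EuclideanSpace ℝ (Fin d) → ℂ) : EuclideanSpace ℝ (Fin d) → ℂ :=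
  fun x => fderiv ℝ f x (EuclideanSpace.single i 1)

/-- The iterated partial derivative `∂^j` for a multiindex `j ∈ ℕ^d`. -/
noncomputable def multiDeriv {d : ℕ} (j : Fin d → ℕ)
    (f : EuclideanSpace ℝ (Fin d) → ℂ) : EuclideanSpace ℝ (Fin d) → ℂ :=
  (List.finRange d).foldr (fun i g => (partialDeriv i)^[j i] g) f

end

section Aux

open Real

/-- Extraction of a pointwise form of `Pcond`. -/
lemma pcond_extract {f : ℝ → ℝ} (htend : Filter.Tendsto f Filter.atTop Filter.atTop)
    {γ : ℝ} (h : Pcond f γ) :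
    ∃ K c T : ℝ, 1 < K ∧ 1 ≤ c ∧ c < K ∧ 1 ≤ T ∧
      ∀ t, T ≤ t → 0 < f t ∧ f (K ^ γ * t) ≤ c * f t := by
  obtain ⟨K, hK, c0, hc0, hev⟩ := h
  have hpos : ∀ᶠ t : ℝ in Filter.atTop, (1:ℝ) ≤ f t := htend.eventually_ge_atTop 1
  have h1 : ∀ᶠ t : ℝ in Filter.atTop,
      (1:ℝ) ≤ f t ∧ f (K ^ γ * t) / f t ≤ c0 := hpos.and hev
  obtain ⟨T, hT⟩ := Filter.eventually_atTop.mp h1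
  refine ⟨K, max c0 1, max T 1, hK, le_max_right _ _, max_lt hc0 hK, le_max_right _ _, ?_⟩
  intro t ht
  obtain ⟨hf1, hratio⟩ := hT t (le_trans (le_max_left _ _) ht)
  have hfpos : 0 < f t := lt_of_lt_of_le one_pos hf1
  refine ⟨hfpos, ?_⟩
  calc f (K ^ γ * t) ≤ c0 * f t := (div_le_iff₀ hfpos).mp hratio
    _ ≤ max c0 1 * f t := mul_le_mul_of_nonneg_right (le_max_left _ _) hfpos.le

/-- Iterated step estimate. -/
lemma pcond_iterate {f : ℝ → ℝ} (hmono : MonotoneOn f (Set.Ici 0))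
    {a c X : ℝ} (ha : 1 < a) (hc : 0 ≤ c) (hX : 1 ≤ X)
    (hstep : ∀ x, X ≤ x → f (a * x) ≤ c * f x) :
    ∀ n : ℕ, ∀ x, X ≤ x → f (a ^ n * x) ≤ c ^ n * f x := by
  intro n
  induction n with
  | zero => intro x hx; simp
  | succ n ih =>
    intro x hx
    have hxpos : (0:ℝ) < x := lt_of_lt_of_le one_pos (hX.trans hx)
    have han : (1:ℝ) ≤ a ^ n := one_le_pow₀ ha.le
    have hxX : X ≤ a ^ n * x := by nlinarith
    have h2 : a ^ (n + 1) * x = a * (a ^ n * x) := by ring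
    rw [h2]
    calc f (a * (a ^ n * x)) ≤ c * f (a ^ n * x) := hstep _ hxX
      _ ≤ c * (c ^ n * f x) := mul_le_mul_of_nonneg_left (ih x hx) hc
      _ = c ^ (n + 1) * f x := by ring

/-- Power-type growth bound deduced from a one-step estimate. -/
lemma pcond_powbound {f : ℝ → ℝ} (hmono : MonotoneOn f (Set.Ici 0))
    (hnn : ∀ x, 0 ≤ x → 0 ≤ f x)
    {a c X : ℝ} (ha : 1 < a) (hc : 1 ≤ c) (hX : 1 ≤ X)
    (hstep : ∀ x, X ≤ x → f (a * x) ≤ c * f x) :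
    ∀ y, X ≤ y → ∀ t, 1 ≤ t →
      f (y * t) ≤ c * f y * t ^ (Real.log c / Real.log a) := by
  intro y hy t ht
  set β := Real.log c / Real.log a with hβ
  have hla : 0 < Real.log a := Real.log_pos ha
  have hlc : 0 ≤ Real.log c := Real.log_nonneg hc
  have ht0 : (0:ℝ) < t := lt_of_lt_of_le one_pos ht
  have hy0 : (0:ℝ) < y := lt_of_lt_of_le one_pos (hX.trans hy)
  set n := ⌊Real.log t / Real.log a⌋₊ with hn
  have hlt0 : 0 ≤ Real.log t := Real.log_nonneg ht
  have hn1 : (n:ℝ) ≤ Real.log t / Real.log a := Nat.floor_le (by positivity)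
  have hn2 : Real.log t / Real.log a < (n:ℝ) + 1 := Nat.lt_floor_add_one _
  have hta : t ≤ a ^ (n + 1) := by
    have h1 : Real.log t < ((n:ℝ) + 1) * Real.log a := by
      rwa [div_lt_iff₀ hla] at hn2
    have h2 : Real.log t < Real.log (a ^ (n + 1)) := by
      rw [Real.log_pow]; push_cast; linarith
    have h3 := Real.exp_lt_exp.mpr h2
    rw [Real.exp_log ht0, Real.exp_log (by positivity)] at h3
    exact h3.le
  have hcn : c ^ n ≤ t ^ β := by
    have h1 : (n:ℝ) * Real.log c ≤ β * Real.log t := by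
      rw [hβ]
      rw [div_mul_eq_mul_div, le_div_iff₀ hla]
      calc (n:ℝ) * Real.log c * Real.log a = ((n:ℝ) * Real.log a) * Real.log c := by ring
        _ ≤ Real.log t * Real.log c := by
            apply mul_le_mul_of_nonneg_right _ hlc
            rwa [← le_div_iff₀ hla]
        _ = Real.log c * Real.log t := by ring
    calc c ^ n = Real.exp ((n:ℝ) * Real.log c) := by
          rw [← Real.log_pow, Real.exp_log (by positivity)]
      _ ≤ Real.exp (β * Real.log t) := Real.exp_le_exp.mpr h1
      _ = t ^ β := by rw [Real.rpow_def_of_pos ht0 β, mul_comm]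
  have hfyn : 0 ≤ f y := hnn y hy0.le
  calc f (y * t) ≤ f (a ^ (n + 1) * y) := by
        apply hmono (Set.mem_Ici.mpr (by positivity : (0:ℝ) ≤ y * t))
          (Set.mem_Ici.mpr (by positivity : (0:ℝ) ≤ a ^ (n+1) * y))
        nlinarith
    _ ≤ c ^ (n + 1) * f y := pcond_iterate hmono ha (by linarith) hX hstep (n+1) y hy
    _ = c * c ^ n * f y := by ring
    _ ≤ c * t ^ β * f y := by
        apply mul_le_mul_of_nonneg_right _ hfyn
        exact mul_le_mul_of_nonneg_left hcn (by linarith)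
    _ = c * f y * t ^ β := by ring

end Aux
section Aux2

lemma weight_nonneg {ω : ℝ → ℝ} (hω : IsWeightFunction ω) :
    ∀ x, 0 ≤ x → 0 ≤ ω x := by
  intro x hx
  have := hω.monotoneOn (Set.mem_Ici.mpr le_rfl) (Set.mem_Ici.mpr hx) hx
  rwa [hω.map_zero] at this

/-- `(ω₅)` follows from `(P_{ω,γ})` for some `γ > 1`. -/
lemma omega5_of_pcond {ω : ℝ → ℝ} (hω : IsWeightFunction ω)
    {γ : ℝ} (hγ : 1 < γ) (hP : Pcond ω γ) : Omega5 ω := by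
  obtain ⟨K, c, T, hK, hc1, hcK, hT1, hmain⟩ := pcond_extract hω.tendsto_atTop hP
  set a := K ^ γ with ha_def
  have hK0 : (0:ℝ) < K := lt_trans one_pos hK
  have haK : K ≤ a := by
    calc K = K ^ (1:ℝ) := (Real.rpow_one K).symm
      _ ≤ K ^ γ := Real.rpow_le_rpow_of_exponent_le hK.le hγ.le
  have ha1 : 1 < a := lt_of_lt_of_le hK haK
  have hca : c < a := lt_of_lt_of_le hcK haK
  set β := Real.log c / Real.log a with hβ_def
  have hla : 0 < Real.log a := Real.log_pos ha1
  have hβ0 : 0 ≤ β := div_nonneg (Real.log_nonneg hc1) hla.le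
  have hβ1 : β < 1 := by
    rw [hβ_def, div_lt_one hla]
    exact Real.log_lt_log (lt_of_lt_of_le one_pos hc1) hca
  have hpow := pcond_powbound hω.monotoneOn (weight_nonneg hω) ha1 hc1 hT1
    (fun x hx => (hmain x hx).2) T le_rfl
  -- f t ≤ C * t ^ β for t ≥ T, with C = c * ω T / T ^ β ... use direct form
  rw [Omega5, Asymptotics.isLittleO_iff]
  intro ε hε
  have hTpos : (0:ℝ) < T := lt_of_lt_of_le one_pos hT1
  set C := c * ω T with hC
  have hC0 : 0 ≤ C := mul_nonneg (by linarith) (weight_nonneg hω T hTpos.le)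
  have htend : Filter.Tendsto (fun t : ℝ => ε * (T ^ β * t ^ (1 - β)))
      Filter.atTop Filter.atTop := by
    apply Filter.Tendsto.const_mul_atTop hε
    apply Filter.Tendsto.const_mul_atTop (by positivity : (0:ℝ) < T ^ β)
    exact tendsto_rpow_atTop (by linarith)
  have hev1 : ∀ᶠ t : ℝ in Filter.atTop, C ≤ ε * (T ^ β * t ^ (1 - β)) :=
    htend.eventually_ge_atTop C
  filter_upwards [hev1, Filter.eventually_ge_atTop T] with t hct htT
  have ht0 : (0:ℝ) < t := lt_of_lt_of_le hTpos htT
  have hkey : ω t ≤ C * (t / T) ^ β := by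
    have := hpow (t / T) ((one_le_div hTpos).mpr htT)
    rw [mul_div_cancel₀ _ (ne_of_gt hTpos)] at this
    exact this
  have hratio : (t / T) ^ β ≤ t ^ β / T ^ β := by
    rw [Real.div_rpow ht0.le hTpos.le]
  have h2 : ω t ≤ C / T ^ β * t ^ β := by
    calc ω t ≤ C * (t / T) ^ β := hkey
      _ ≤ C * (t ^ β / T ^ β) := mul_le_mul_of_nonneg_left hratio hC0
      _ = C / T ^ β * t ^ β := by ring
  have h3 : C / T ^ β * t ^ β ≤ ε * t := by
    rw [div_mul_eq_mul_div, div_le_iff₀ (by positivity : (0:ℝ) < T ^ β)]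
    have ht1 : t ^ β * t ^ (1 - β) = t := by
      rw [← Real.rpow_add ht0]; simp
    calc C * t ^ β ≤ ε * (T ^ β * t ^ (1 - β)) * t ^ β :=
          mul_le_mul_of_nonneg_right hct (by positivity)
      _ = ε * T ^ β * (t ^ β * t ^ (1 - β)) := by ring
      _ = ε * T ^ β * t := by rw [ht1]
      _ = ε * t * T ^ β := by ring
  have habs : |ω t| = ω t := abs_of_nonneg (weight_nonneg hω t ht0.le)
  have habs2 : ‖t‖ = t := by rw [Real.norm_eq_abs, abs_of_pos ht0]
  rw [Real.norm_eq_abs, habs, habs2]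
  linarith

/-- Boundedness of the sets defining the upper conjugate. -/
lemma bddAbove_conj {ω : ℝ → ℝ} (hω : IsWeightFunction ω) (h5 : Omega5 ω)
    {s : ℝ} (hs : 0 < s) : BddAbove ((fun t : ℝ => ω t - s * t) '' Set.Ici 0) := by
  have hev := (Asymptotics.isLittleO_iff.mp h5) (half_pos hs)
  obtain ⟨T0, hT0⟩ := Filter.eventually_atTop.mp hev
  set T := max T0 1 with hT
  refine ⟨ω T, ?_⟩
  rintro x ⟨u, hu, rfl⟩
  show ω u - s * u ≤ ω T
  have hu0 : (0:ℝ) ≤ u := hu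
  have hT0' : (0:ℝ) ≤ T := le_trans zero_le_one (le_max_right _ _)
  have hTnn : 0 ≤ ω T := weight_nonneg hω T hT0'
  rcases le_total u T with h | h
  · have : ω u ≤ ω T := hω.monotoneOn hu (Set.mem_Ici.mpr hT0') h
    nlinarith
  · have h1 := hT0 u (le_trans (le_max_left _ _) h)
    rw [Real.norm_eq_abs, Real.norm_eq_abs, abs_of_nonneg hu0,
      abs_of_nonneg (weight_nonneg hω u hu0)] at h1
    nlinarith

lemma le_upperConj {ω : ℝ → ℝ} {s u : ℝ}
    (hb : BddAbove ((fun t : ℝ => ω t - s * t) '' Set.Ici 0))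
    (hu : 0 ≤ u) : ω u - s * u ≤ upperConj ω s :=
  le_csSup hb ⟨u, hu, rfl⟩

lemma upperConj_le {ω : ℝ → ℝ} {s M : ℝ} (h : ∀ u, 0 ≤ u → ω u - s * u ≤ M) :
    upperConj ω s ≤ M := by
  apply csSup_le (Set.Nonempty.image _ ⟨0, le_rfl⟩)
  rintro x ⟨u, hu, rfl⟩
  exact h u hu

lemma upperConj_nonneg {ω : ℝ → ℝ} (hω : IsWeightFunction ω)
    {s : ℝ} (hb : BddAbove ((fun t : ℝ => ω t - s * t) '' Set.Ici 0)) :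
    0 ≤ upperConj ω s := by
  have h0 : ω 0 - s * 0 ≤ upperConj ω s := le_upperConj hb le_rfl
  rw [hω.map_zero] at h0
  linarith

end Aux2
section Aux3

variable {ω : ℝ → ℝ}

lemma upperConjIota_zero : upperConjIota ω 0 = 0 := if_pos rfl

lemma upperConjIota_of_ne {t : ℝ} (ht : t ≠ 0) :
    upperConjIota ω t = upperConj ω (1 / t) := if_neg ht

lemma upperConjIota_nonneg (hω : IsWeightFunction ω) (h5 : Omega5 ω) :
    ∀ t, 0 ≤ t → 0 ≤ upperConjIota ω t := by
  intro t ht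
  rcases eq_or_lt_of_le ht with h | h
  · rw [← h, upperConjIota_zero]
  · rw [upperConjIota_of_ne (ne_of_gt h)]
    exact upperConj_nonneg hω (bddAbove_conj hω h5 (by positivity))

lemma upperConjIota_mono (hω : IsWeightFunction ω) (h5 : Omega5 ω) :
    MonotoneOn (upperConjIota ω) (Set.Ici 0) := by
  rintro x (hx : (0:ℝ) ≤ x) y (hy : (0:ℝ) ≤ y) hxy
  rcases eq_or_lt_of_le hx with h | hx0
  · rw [← h, upperConjIota_zero]
    exact upperConjIota_nonneg hω h5 y hy
  · have hy0 : (0:ℝ) < y := lt_of_lt_of_le hx0 hxy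
    rw [upperConjIota_of_ne (ne_of_gt hx0), upperConjIota_of_ne (ne_of_gt hy0)]
    apply upperConj_le
    intro u hu
    have h1 : ω u - 1 / y * u ≤ upperConj ω (1 / y) :=
      le_upperConj (bddAbove_conj hω h5 (by positivity)) hu
    have h2 : 1 / y * u ≤ 1 / x * u :=
      mul_le_mul_of_nonneg_right (div_le_div_of_nonneg_left one_pos.le hx0 hxy) hu
    linarith

lemma upperConjIota_tendsto (hω : IsWeightFunction ω) (h5 : Omega5 ω) :
    Filter.Tendsto (upperConjIota ω) Filter.atTop Filter.atTop := by
  rw [Filter.tendsto_atTop]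
  intro M
  obtain ⟨u₀, hu₀⟩ := (hω.tendsto_atTop.eventually
    (Filter.eventually_ge_atTop (M + 1))).and (Filter.eventually_ge_atTop 0) |>.exists
  rw [Filter.eventually_atTop]
  refine ⟨max u₀ 1, fun x hx => ?_⟩
  have hx1 : (1:ℝ) ≤ x := le_trans (le_max_right _ _) hx
  have hx0 : (0:ℝ) < x := lt_of_lt_of_le one_pos hx1
  have hux : u₀ ≤ x := le_trans (le_max_left _ _) hx
  rw [upperConjIota_of_ne (ne_of_gt hx0)]
  have h1 : ω u₀ - 1 / x * u₀ ≤ upperConj ω (1 / x) :=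
    le_upperConj (bddAbove_conj hω h5 (by positivity)) hu₀.2
  have h2 : 1 / x * u₀ ≤ 1 := by
    rw [div_mul_eq_mul_div, one_mul, div_le_one hx0]; exact hux
  linarith [hu₀.1]

lemma omega_le_upperConjIota_add (hω : IsWeightFunction ω) (h5 : Omega5 ω)
    {x u : ℝ} (hx : 0 < x) (hu : 0 ≤ u) :
    ω u ≤ upperConjIota ω x + u / x := by
  rw [upperConjIota_of_ne (ne_of_gt hx)]
  have h1 : ω u - 1 / x * u ≤ upperConj ω (1 / x) :=
    le_upperConj (bddAbove_conj hω h5 (by positivity)) hu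
  have : 1 / x * u = u / x := by ring
  linarith [this ▸ h1]

end Aux3
section Aux4

variable {ω : ℝ → ℝ}

/-- Forward transfer: `(P_{ω,γ})` with `γ > 1` gives `(P_{σ,γ-1})` for `σ = (ω⋆)^ι`. -/
lemma pcond_upperConjIota_of_pcond (hω : IsWeightFunction ω) (h5 : Omega5 ω)
    {γ : ℝ} (hγ : 1 < γ) (hP : Pcond ω γ) : Pcond (upperConjIota ω) (γ - 1) := by
  obtain ⟨K, c, T, hK, hc1, hcK, hT1, hmain⟩ := pcond_extract hω.tendsto_atTop hP
  have hK0 : (0:ℝ) < K := lt_trans one_pos hK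
  have hKg : (0:ℝ) < K ^ γ := Real.rpow_pos_of_pos hK0 γ
  have hKg1 : K ^ (γ - 1) = K ^ γ / K := by
    rw [Real.rpow_sub hK0, Real.rpow_one]
  have hKg1pos : (0:ℝ) < K ^ (γ - 1) := Real.rpow_pos_of_pos hK0 _
  set σ := upperConjIota ω with hσ
  set B := ω (K ^ γ * T) with hB
  have hc0 : (0:ℝ) < c := lt_of_lt_of_le one_pos hc1
  -- main pointwise bound
  have key : ∀ x : ℝ, 0 < x → σ (K ^ (γ - 1) * x) ≤ max (c * σ x) B := by
    intro x hx
    have hx' : (0:ℝ) < K ^ (γ - 1) * x := by positivity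
    rw [hσ, upperConjIota_of_ne (ne_of_gt hx')]
    apply upperConj_le
    intro u hu
    rcases le_total u (K ^ γ * T) with h | h
    · have h1 : ω u ≤ B := hω.monotoneOn (Set.mem_Ici.mpr hu)
        (Set.mem_Ici.mpr (by positivity)) h
      have h2 : 0 ≤ 1 / (K ^ (γ - 1) * x) * u := by positivity
      exact le_max_of_le_right (by linarith)
    · set v := u / K ^ γ with hv
      have hvT : T ≤ v := by
        rw [hv, le_div_iff₀ hKg]; linarith
      have hv0 : (0:ℝ) ≤ v := le_trans (by linarith) hvT
      have huv : u = K ^ γ * v := by rw [hv]; field_simp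
      have hstep := (hmain v hvT).2
      -- the linear term
      have hlin : 1 / (K ^ (γ - 1) * x) * u = K * v / x := by
        rw [huv, hKg1]; field_simp
      -- compare with upperConj at K/(c*x)
      have hcx : (0:ℝ) < c * x / K := by positivity
      have hb2 := bddAbove_conj hω h5 (s := 1 / (c * x / K)) (by positivity)
      have h3 : ω v - 1 / (c * x / K) * v ≤ upperConj ω (1 / (c * x / K)) :=
        le_upperConj hb2 hv0
      have h4 : upperConj ω (1 / (c * x / K)) = σ (c * x / K) := by
        rw [hσ, upperConjIota_of_ne (ne_of_gt hcx)]
      have h5' : σ (c * x / K) ≤ σ x := by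
        apply upperConjIota_mono hω h5 (Set.mem_Ici.mpr hcx.le) (Set.mem_Ici.mpr (by positivity))
        rw [div_le_iff₀ hK0]
        nlinarith
      have hexp : c * (1 / (c * x / K) * v) = K * v / x := by
        field_simp
      have : ω u - 1 / (K ^ (γ - 1) * x) * u ≤ c * σ x := by
        rw [hlin, huv]
        calc ω (K ^ γ * v) - K * v / x ≤ c * ω v - K * v / x := by linarith
          _ = c * (ω v - 1 / (c * x / K) * v) := by rw [mul_sub, hexp]
          _ ≤ c * upperConj ω (1 / (c * x / K)) := mul_le_mul_of_nonneg_left h3 hc0.le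
          _ = c * σ (c * x / K) := by rw [h4]
          _ ≤ c * σ x := mul_le_mul_of_nonneg_left h5' hc0.le
      exact le_max_of_le_left this
  -- eventual bound
  refine ⟨K, hK, c, hcK, ?_⟩
  have hev : ∀ᶠ x : ℝ in Filter.atTop, max B 1 ≤ σ x :=
    (upperConjIota_tendsto hω h5).eventually_ge_atTop (max B 1)
  filter_upwards [hev, Filter.eventually_gt_atTop 0] with x hBx hx0
  have hσpos : (0:ℝ) < σ x := lt_of_lt_of_le one_pos (le_trans (le_max_right _ _) hBx)
  have hBB : B ≤ c * σ x := by
    calc B ≤ σ x := le_trans (le_max_left _ _) hBx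
      _ = 1 * σ x := (one_mul _).symm
      _ ≤ c * σ x := mul_le_mul_of_nonneg_right hc1 hσpos.le
  rw [div_le_iff₀ hσpos]
  calc σ (K ^ (γ - 1) * x) ≤ max (c * σ x) B := key x hx0
    _ = c * σ x := max_eq_left hBB

/-- `(ω₁)` from a `Pcond` for a monotone nonnegative function. -/
lemma omega1_of_pcond {f : ℝ → ℝ} (hmono : MonotoneOn f (Set.Ici 0))
    (hnn : ∀ x, 0 ≤ x → 0 ≤ f x)
    (htend : Filter.Tendsto f Filter.atTop Filter.atTop)
    {δ : ℝ} (hδ : 0 < δ) (hP : Pcond f δ) : Omega1 f := by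
  obtain ⟨K, c, X, hK, hc1, hcK, hX1, hmain⟩ := pcond_extract htend hP
  have hK0 : (0:ℝ) < K := lt_trans one_pos hK
  set a := K ^ δ with ha_def
  have ha1 : 1 < a := Real.one_lt_rpow_iff_of_pos hK0 |>.mpr (Or.inl ⟨hK, hδ⟩)
  obtain ⟨n, hn⟩ := pow_unbounded_of_one_lt (2:ℝ) ha1
  have hiter := pcond_iterate hmono ha1 (by linarith : (0:ℝ) ≤ c) hX1
    (fun x hx => (hmain x hx).2)
  set L := max (max (c ^ n) (f (2 * X))) 1 with hL
  refine ⟨L, le_max_right _ _, ?_⟩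
  intro t ht
  have hL0 : (0:ℝ) < L := lt_of_lt_of_le one_pos (le_max_right _ _)
  rcases le_total X t with h | h
  · have h1 : f (2 * t) ≤ f (a ^ n * t) := by
      apply hmono (Set.mem_Ici.mpr (by positivity)) (Set.mem_Ici.mpr (by positivity))
      nlinarith [lt_of_lt_of_le one_pos (hX1.trans h)]
    have h2 : f (a ^ n * t) ≤ c ^ n * f t := hiter n t h
    have h3 : c ^ n ≤ L := le_trans (le_max_left _ _) (le_max_left _ _)
    have hft : 0 ≤ f t := hnn t ht
    calc f (2 * t) ≤ c ^ n * f t := le_trans h1 h2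
      _ ≤ L * f t := mul_le_mul_of_nonneg_right h3 hft
      _ ≤ L * (f t + 1) := by nlinarith
  · have h1 : f (2 * t) ≤ f (2 * X) := by
      apply hmono (Set.mem_Ici.mpr (by positivity)) (Set.mem_Ici.mpr (by positivity))
      linarith
    have h2 : f (2 * X) ≤ L := le_trans (le_max_right _ _) (le_max_left _ _)
    have hft : 0 ≤ f t := hnn t ht
    calc f (2 * t) ≤ L := le_trans h1 h2
      _ = L * 1 := (mul_one _).symm
      _ ≤ L * (f t + 1) := by nlinarith

end Aux4
section Aux5

variable {ω : ℝ → ℝ}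

/-- Bound on `σ(2t/ω(t))` by a constant multiple of `ω(t)`. -/
lemma upperConjIota_near_omega (hω : IsWeightFunction ω) (h5 : Omega5 ω)
    {γ₀ : ℝ} (hγ₀ : 1 < γ₀) (hP₀ : Pcond ω γ₀) :
    ∃ C₁ T₀ : ℝ, 1 ≤ C₁ ∧ 1 ≤ T₀ ∧ ∀ t, T₀ ≤ t →
      0 < ω t ∧ upperConjIota ω (2 * t / ω t) ≤ C₁ * ω t := by
  obtain ⟨K₀, c₀, T₀, hK₀, hc₀1, hc₀K₀, hT₀1, hmain₀⟩ := pcond_extract hω.tendsto_atTop hP₀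
  have hK₀0 : (0:ℝ) < K₀ := lt_trans one_pos hK₀
  set a₀ := K₀ ^ γ₀ with ha₀
  have haK₀ : K₀ ≤ a₀ := by
    calc K₀ = K₀ ^ (1:ℝ) := (Real.rpow_one K₀).symm
      _ ≤ K₀ ^ γ₀ := Real.rpow_le_rpow_of_exponent_le hK₀.le hγ₀.le
  have ha₀1 : 1 < a₀ := lt_of_lt_of_le hK₀ haK₀
  have hca₀ : c₀ < a₀ := lt_of_lt_of_le hc₀K₀ haK₀
  set β₀ := Real.log c₀ / Real.log a₀ with hβ₀
  have hla : 0 < Real.log a₀ := Real.log_pos ha₀1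
  have hβ0 : 0 ≤ β₀ := div_nonneg (Real.log_nonneg hc₀1) hla.le
  have hβ1 : β₀ < 1 := by
    rw [hβ₀, div_lt_one hla]
    exact Real.log_lt_log (lt_of_lt_of_le one_pos hc₀1) hca₀
  have h1β : (0:ℝ) < 1 - β₀ := by linarith
  have hc₀0 : (0:ℝ) < c₀ := lt_of_lt_of_le one_pos hc₀1
  have hpow := pcond_powbound hω.monotoneOn (weight_nonneg hω) ha₀1 hc₀1 hT₀1
    (fun x hx => (hmain₀ x hx).2)
  set R' := (4 * c₀) ^ (1 - β₀)⁻¹ with hR'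
  have hR'0 : (0:ℝ) < R' := Real.rpow_pos_of_pos (by linarith) _
  set C₀ := c₀ * R' ^ β₀ with hC₀
  have hC₀0 : (0:ℝ) ≤ C₀ := by positivity
  refine ⟨max 1 C₀, T₀, le_max_left _ _, hT₀1, ?_⟩
  intro t ht
  have hωt : 0 < ω t := (hmain₀ t ht).1
  have ht0 : (0:ℝ) < t := lt_of_lt_of_le one_pos (hT₀1.trans ht)
  refine ⟨hωt, ?_⟩
  have hx0 : (0:ℝ) < 2 * t / ω t := by positivity
  rw [upperConjIota_of_ne (ne_of_gt hx0)]
  apply upperConj_le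
  intro u hu
  have hlin : 1 / (2 * t / ω t) * u = ω t * u / (2 * t) := by
    field_simp
  rw [hlin]
  rcases le_total u t with h | h
  · have h1 : ω u ≤ ω t := hω.monotoneOn (Set.mem_Ici.mpr hu) (Set.mem_Ici.mpr ht0.le) h
    have h2 : 0 ≤ ω t * u / (2 * t) := by positivity
    have h3 : ω t ≤ max 1 C₀ * ω t := by nlinarith [le_max_left (1:ℝ) C₀]
    linarith
  · set r := u / t with hr
    have hr1 : 1 ≤ r := (one_le_div ht0).mpr h
    have hr0 : (0:ℝ) < r := lt_of_lt_of_le one_pos hr1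
    have hur : u = t * r := by rw [hr]; field_simp
    have h1 : ω u ≤ c₀ * ω t * r ^ β₀ := by
      rw [hur]; exact hpow t ht r hr1
    have hlin2 : ω t * u / (2 * t) = ω t * r / 2 := by
      rw [hur]; field_simp
    rw [hlin2]
    rcases le_total (4 * c₀) (r ^ (1 - β₀)) with hcase | hcase
    · -- large r : the expression is nonpositive
      have hsplit : r ^ β₀ * r ^ (1 - β₀) = r := by
        rw [← Real.rpow_add hr0]; simp
      have h2 : c₀ * r ^ β₀ ≤ r / 4 := by
        rw [le_div_iff₀ (by norm_num : (0:ℝ) < 4)]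
        nlinarith [Real.rpow_nonneg hr0.le β₀, hsplit, hcase]
      have h3 : c₀ * ω t * r ^ β₀ - ω t * r / 2 ≤ 0 := by nlinarith
      have h4 : 0 ≤ max 1 C₀ * ω t := by positivity
      linarith
    · -- small r : r < R'
      have hrR : r ≤ R' := by
        have h2 : (r ^ (1 - β₀)) ^ (1 - β₀)⁻¹ ≤ (4 * c₀) ^ (1 - β₀)⁻¹ :=
          Real.rpow_le_rpow (Real.rpow_nonneg hr0.le _) hcase (by positivity)
        rwa [← Real.rpow_mul hr0.le, mul_inv_cancel₀ (ne_of_gt h1β), Real.rpow_one] at h2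
      have h2 : r ^ β₀ ≤ R' ^ β₀ := Real.rpow_le_rpow hr0.le hrR hβ0
      have h3 : c₀ * ω t * r ^ β₀ ≤ C₀ * ω t := by
        calc c₀ * ω t * r ^ β₀ ≤ c₀ * ω t * R' ^ β₀ :=
              mul_le_mul_of_nonneg_left h2 (by positivity)
          _ = C₀ * ω t := by rw [hC₀]; ring
      have h4 : C₀ * ω t ≤ max 1 C₀ * ω t :=
        mul_le_mul_of_nonneg_right (le_max_right _ _) hωt.le
      have h5' : 0 ≤ ω t * r / 2 := by positivity
      linarith

/-- Backward transfer: `Pcond` for `σ` at `γ'` gives `Pcond` for `ω` at `γ' + 1`. -/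
lemma pcond_of_pcond_upperConjIota (hω : IsWeightFunction ω) (h5 : Omega5 ω)
    {γ₀ : ℝ} (hγ₀ : 1 < γ₀) (hP₀ : Pcond ω γ₀)
    {γ' : ℝ} (hγ' : 0 < γ') (hP : Pcond (upperConjIota ω) γ') :
    Pcond ω (γ' + 1) := by
  obtain ⟨C₁, T₀, hC₁1, hT₀1, hA⟩ := upperConjIota_near_omega hω h5 hγ₀ hP₀
  have hC₁0 : (0:ℝ) < C₁ := lt_of_lt_of_le one_pos hC₁1
  obtain ⟨K, c, X, hK, hc1, hcK, hX1, hmain⟩ :=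
    pcond_extract (upperConjIota_tendsto hω h5) hP
  have hK0 : (0:ℝ) < K := lt_trans one_pos hK
  have hc0 : (0:ℝ) < c := lt_of_lt_of_le one_pos hc1
  set a := K ^ γ' with ha
  have ha1 : 1 < a := Real.one_lt_rpow_iff_of_pos hK0 |>.mpr (Or.inl ⟨hK, hγ'⟩)
  have hiter := pcond_iterate (upperConjIota_mono hω h5) ha1 (le_of_lt hc0) hX1
    (fun x hx => (hmain x hx).2)
  -- choose N
  have hcKdiv : c / K < 1 := (div_lt_one hK0).mpr hcK
  have hcKdiv0 : (0:ℝ) ≤ c / K := by positivity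
  obtain ⟨N₀, hN₀⟩ := exists_pow_lt_of_lt_one (show (0:ℝ) < 1 / (2 * C₁) by positivity) hcKdiv
  set N := N₀ + 1 with hN
  have hNbound : (c / K) ^ N < 1 / (2 * C₁) := by
    calc (c / K) ^ N ≤ (c / K) ^ N₀ :=
          pow_le_pow_of_le_one hcKdiv0 hcKdiv.le (Nat.le_succ _)
      _ < 1 / (2 * C₁) := hN₀
  have hKN : K ^ (N:ℝ) = K ^ N := Real.rpow_natCast K N
  have hKN1 : (1:ℝ) < K ^ N := one_lt_pow₀ hK (by omega)
  set c₁ := c ^ N * C₁ + K ^ N / 2 with hc₁def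
  have hc₁K₁ : c₁ < K ^ (N:ℝ) := by
    rw [hKN, hc₁def]
    have h1 : (c / K) ^ N * C₁ < 1 / 2 := by
      have := mul_lt_mul_of_pos_right hNbound hC₁0
      calc (c / K) ^ N * C₁ < 1 / (2 * C₁) * C₁ := this
        _ = 1 / 2 := by field_simp
    have h2 : (c / K) ^ N = c ^ N / K ^ N := div_pow c K N
    have hKN0 : (0:ℝ) < K ^ N := by positivity
    rw [h2] at h1
    have h3 : c ^ N * C₁ < K ^ N / 2 := by
      have := mul_lt_mul_of_pos_right h1 hKN0
      calc c ^ N * C₁ = c ^ N / K ^ N * C₁ * K ^ N := by field_simp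
        _ < 1 / 2 * K ^ N := this
        _ = K ^ N / 2 := by ring
    linarith
  refine ⟨K ^ (N:ℝ), by rw [hKN]; exact hKN1, c₁, hc₁K₁, ?_⟩
  -- eventual estimate
  have hev2 : ∀ᶠ t : ℝ in Filter.atTop, ‖ω t‖ ≤ 1 / X * ‖t‖ :=
    (Asymptotics.isLittleO_iff.mp h5) (by positivity)
  filter_upwards [hev2, Filter.eventually_ge_atTop T₀, Filter.eventually_gt_atTop 0]
    with t hlittle htT₀ ht0
  obtain ⟨hωt, hclaimA⟩ := hA t htT₀
  rw [Real.norm_eq_abs, Real.norm_eq_abs, abs_of_pos hωt, abs_of_pos ht0] at hlittle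
  set w := ω t with hw
  set xs := 2 * t / w with hxs
  have hxs0 : (0:ℝ) < xs := by rw [hxs]; positivity
  have hXxs : X ≤ xs := by
    rw [hxs, le_div_iff₀ hωt]
    have hX0 : (0:ℝ) < X := lt_of_lt_of_le one_pos hX1
    have : X * w ≤ X * (1 / X * t) := mul_le_mul_of_nonneg_left hlittle hX0.le
    calc X * w ≤ X * (1 / X * t) := this
      _ = t := by field_simp
      _ ≤ 2 * t := by linarith
  -- key chain
  have hP' : (0:ℝ) < K ^ (γ' * (N:ℝ)) := Real.rpow_pos_of_pos hK0 _
  have haN : a ^ N = K ^ (γ' * (N:ℝ)) := by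
    rw [ha, ← Real.rpow_natCast (K ^ γ') N, ← Real.rpow_mul hK0.le]
  have hupper := omega_le_upperConjIota_add hω h5
    (show (0:ℝ) < a ^ N * xs by positivity)
    (show (0:ℝ) ≤ (K ^ (N:ℝ)) ^ (γ' + 1) * t by
      have hKp : (0:ℝ) < K ^ (N:ℝ) := Real.rpow_pos_of_pos hK0 _
      positivity)
  have hsig : upperConjIota ω (a ^ N * xs) ≤ c ^ N * C₁ * w := by
    calc upperConjIota ω (a ^ N * xs) ≤ c ^ N * upperConjIota ω xs :=
          hiter N xs hXxs
      _ ≤ c ^ N * (C₁ * w) := by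
          apply mul_le_mul_of_nonneg_left _ (by positivity)
          rw [hxs, hw]; exact hclaimA
      _ = c ^ N * C₁ * w := by ring
  have hterm : (K ^ (N:ℝ)) ^ (γ' + 1) * t / (a ^ N * xs) = K ^ N / 2 * w := by
    have e1 : (K ^ (N:ℝ)) ^ (γ' + 1) = K ^ ((N:ℝ) * (γ' + 1)) := by
      rw [← Real.rpow_mul hK0.le]
    have e2 : K ^ ((N:ℝ) * (γ' + 1)) = K ^ (γ' * (N:ℝ)) * K ^ (N:ℝ) := by
      rw [← Real.rpow_add hK0]; ring_nf
    rw [e1, e2, haN, hxs, hKN]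
    field_simp
  have hfinal : ω ((K ^ (N:ℝ)) ^ (γ' + 1) * t) ≤ c₁ * w := by
    calc ω ((K ^ (N:ℝ)) ^ (γ' + 1) * t)
        ≤ upperConjIota ω (a ^ N * xs) + (K ^ (N:ℝ)) ^ (γ' + 1) * t / (a ^ N * xs) := hupper
      _ ≤ c ^ N * C₁ * w + K ^ N / 2 * w := by rw [hterm]; linarith
      _ = c₁ * w := by rw [hc₁def]; ring
  rw [div_le_iff₀ hωt]
  exact hfinal

end Aux5
section Aux6

lemma exists_pcond_of_lt {f : ℝ → ℝ} {x : ENNReal} (h : x < gammaIndex f) :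
    ∃ γ : ℝ, 0 < γ ∧ Pcond f γ ∧ x < ENNReal.ofReal γ := by
  rw [gammaIndex, lt_iSup_iff] at h
  obtain ⟨γ, hγ⟩ := h
  rw [lt_iSup_iff] at hγ
  obtain ⟨hmem, hx⟩ := hγ
  exact ⟨γ, hmem.1, hmem.2, hx⟩

lemma ofReal_le_gammaIndex {f : ℝ → ℝ} {γ : ℝ} (h0 : 0 < γ) (hP : Pcond f γ) :
    ENNReal.ofReal γ ≤ gammaIndex f := by
  rw [gammaIndex]
  exact le_iSup₂ (f := fun (γ : ℝ) (_ : γ ∈ {γ : ℝ | 0 < γ ∧ Pcond f γ}) =>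
    ENNReal.ofReal γ) γ ⟨h0, hP⟩

/-- Integral condition `(ω_snq)` from a `Pcond` with exponent `> 1`. -/
lemma snq_of_pcond {f : ℝ → ℝ} (hmono : MonotoneOn f (Set.Ici 0))
    (hnn : ∀ x, 0 ≤ x → 0 ≤ f x)
    (htend : Filter.Tendsto f Filter.atTop Filter.atTop)
    {δ : ℝ} (hδ : 1 < δ) (hP : Pcond f δ) : OmegaSnq f := by
  obtain ⟨K, c, X, hK, hc1, hcK, hX1, hmain⟩ := pcond_extract htend hP
  have hK0 : (0:ℝ) < K := lt_trans one_pos hK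
  set a := K ^ δ with ha_def
  have haK : K ≤ a := by
    calc K = K ^ (1:ℝ) := (Real.rpow_one K).symm
      _ ≤ K ^ δ := Real.rpow_le_rpow_of_exponent_le hK.le hδ.le
  have ha1 : 1 < a := lt_of_lt_of_le hK haK
  have hca : c < a := lt_of_lt_of_le hcK haK
  set β := Real.log c / Real.log a with hβ_def
  have hla : 0 < Real.log a := Real.log_pos ha1
  have hβ0 : 0 ≤ β := div_nonneg (Real.log_nonneg hc1) hla.le
  have hβ1 : β < 1 := by
    rw [hβ_def, div_lt_one hla]
    exact Real.log_lt_log (lt_of_lt_of_le one_pos hc1) hca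
  have h1β : (0:ℝ) < 1 - β := by linarith
  have hc0 : (0:ℝ) < c := lt_of_lt_of_le one_pos hc1
  have hpow := pcond_powbound hmono hnn ha1 hc1 hX1 (fun x hx => (hmain x hx).2)
  have hX0 : (0:ℝ) < X := lt_of_lt_of_le one_pos hX1
  have hfX : 0 ≤ f X := hnn X hX0.le
  set D := c / (1 - β) with hD
  have hD0 : (0:ℝ) < D := by positivity
  refine ⟨D * (f X + 1), by positivity, ?_⟩
  intro y hy
  set M := max y X with hM
  have hMX : X ≤ M := le_max_right _ _
  have hM0 : (0:ℝ) < M := lt_of_lt_of_le hX0 hMX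
  have hfM : 0 ≤ f M := hnn M hM0.le
  have hβ2 : β - 2 < -1 := by linarith
  -- pointwise bound
  have hpoint : ∀ t ∈ Set.Ioi (1:ℝ),
      ENNReal.ofReal (f (y * t) / t ^ 2) ≤ ENNReal.ofReal (c * f M * t ^ (β - 2)) := by
    intro t ht
    have ht1 : (1:ℝ) < t := ht
    have ht0 : (0:ℝ) < t := lt_trans one_pos ht1
    apply ENNReal.ofReal_le_ofReal
    have h1 : f (y * t) ≤ f (M * t) := by
      apply hmono (Set.mem_Ici.mpr (by positivity)) (Set.mem_Ici.mpr (by positivity))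
      exact mul_le_mul_of_nonneg_right (le_max_left _ _) ht0.le
    have h2 : f (M * t) ≤ c * f M * t ^ β := hpow M hMX t ht1.le
    have ht2 : (0:ℝ) < t ^ 2 := by positivity
    rw [div_le_iff₀ ht2]
    have hrw : t ^ (β - 2) * t ^ 2 = t ^ β := by
      rw [← Real.rpow_natCast t 2, ← Real.rpow_add ht0]
      norm_num
    calc f (y * t) ≤ c * f M * t ^ β := le_trans h1 h2
      _ = c * f M * (t ^ (β - 2) * t ^ 2) := by rw [hrw]
      _ = c * f M * t ^ (β - 2) * t ^ 2 := by ring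
  have hint : IntegrableOn (fun t : ℝ => c * f M * t ^ (β - 2)) (Set.Ioi 1) :=
    (integrableOn_Ioi_rpow_of_lt hβ2 one_pos).const_mul _
  have hnn' : 0 ≤ᵐ[MeasureTheory.volume.restrict (Set.Ioi (1:ℝ))]
      fun t : ℝ => c * f M * t ^ (β - 2) := by
    rw [Filter.EventuallyLE, MeasureTheory.ae_restrict_iff' measurableSet_Ioi]
    apply Filter.Eventually.of_forall
    intro t ht
    have ht0 : (0:ℝ) < t := lt_trans one_pos ht
    have : (0:ℝ) ≤ t ^ (β - 2) := Real.rpow_nonneg ht0.le _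
    positivity
  have escalar : c * (-(1:ℝ) / (β - 2 + 1)) = D := by
    have h2 : β - 2 + 1 = -(1 - β) := by ring
    rw [hD, h2, div_neg, neg_div, neg_neg, mul_one_div]
  have hval' : ∫ t in Set.Ioi (1:ℝ), c * f M * t ^ (β - 2) = D * f M := by
    rw [MeasureTheory.integral_const_mul, integral_Ioi_rpow_of_lt hβ2 one_pos, Real.one_rpow]
    calc c * f M * (-1 / (β - 2 + 1)) = c * (-(1:ℝ) / (β - 2 + 1)) * f M := by ring
      _ = D * f M := by rw [escalar]
  calc (∫⁻ t in Set.Ioi (1:ℝ), ENNReal.ofReal (f (y * t) / t ^ 2))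
      ≤ ∫⁻ t in Set.Ioi (1:ℝ), ENNReal.ofReal (c * f M * t ^ (β - 2)) :=
        MeasureTheory.setLIntegral_mono' measurableSet_Ioi hpoint
    _ = ENNReal.ofReal (∫ t in Set.Ioi (1:ℝ), c * f M * t ^ (β - 2)) :=
        (MeasureTheory.ofReal_integral_eq_lintegral_ofReal hint hnn').symm
    _ = ENNReal.ofReal (D * f M) := by rw [hval']
    _ ≤ ENNReal.ofReal (D * (f X + 1) * (f y + 1)) := by
        apply ENNReal.ofReal_le_ofReal
        have hfy : 0 ≤ f y := hnn y hy.le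
        have hfMle : f M ≤ f y + f X := by
          rcases max_choice y X with h | h
          · rw [hM, h]; linarith
          · rw [hM, h]; linarith
        nlinarith [mul_nonneg (mul_nonneg hD0.le hfX) hfy,
          mul_le_mul_of_nonneg_left hfMle hD0.le]
  done

end Aux6

/-- Lemma on the upper conjugate: if `γ(ω) > 1` then `ω` has
`(ω₅)` (so `ω⋆(s) < ∞` for every `s > 0`), `(ω⋆)^ι` has `(ω₁)`, and
`γ(ω) = γ((ω⋆)^ι) + 1`; in particular `γ(ω) > 2` implies `(ω_snq)` for `(ω⋆)^ι`. -/
theorem gammaIndex_upperConjIota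
    (ω : ℝ → ℝ) (hω : IsWeightFunction ω) (hγ : 1 < gammaIndex ω) :
    Omega5 ω ∧
    (∀ s : ℝ, 0 < s → BddAbove ((fun t : ℝ => ω t - s * t) '' Set.Ici 0)) ∧
    Omega1 (upperConjIota ω) ∧
    gammaIndex ω = gammaIndex (upperConjIota ω) + 1 ∧
    (2 < gammaIndex ω → OmegaSnq (upperConjIota ω)) := by
  obtain ⟨γ₀, hγ₀pos, hP₀, hγ₀gt⟩ := exists_pcond_of_lt hγ
  have hγ₀1 : 1 < γ₀ := ENNReal.one_lt_ofReal.mp hγ₀gt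
  have h5 : Omega5 ω := omega5_of_pcond hω hγ₀1 hP₀
  have hbdd : ∀ s : ℝ, 0 < s → BddAbove ((fun t : ℝ => ω t - s * t) '' Set.Ici 0) :=
    fun s hs => bddAbove_conj hω h5 hs
  have hσP₀ : Pcond (upperConjIota ω) (γ₀ - 1) :=
    pcond_upperConjIota_of_pcond hω h5 hγ₀1 hP₀
  have hσmono := upperConjIota_mono hω h5
  have hσnn := upperConjIota_nonneg hω h5
  have hσtend := upperConjIota_tendsto hω h5
  have hω1 : Omega1 (upperConjIota ω) :=
    omega1_of_pcond hσmono hσnn hσtend (by linarith) hσP₀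
  have heq : gammaIndex ω = gammaIndex (upperConjIota ω) + 1 := by
    apply le_antisymm
    · rw [gammaIndex]
      apply iSup₂_le
      intro γ hmem
      obtain ⟨hγ0, hPγ⟩ := hmem
      rcases le_or_gt γ 1 with h | h
      · calc ENNReal.ofReal γ ≤ ENNReal.ofReal 1 := ENNReal.ofReal_le_ofReal h
          _ = 1 := ENNReal.ofReal_one
          _ ≤ gammaIndex (upperConjIota ω) + 1 := le_add_self
      · have hσγ := pcond_upperConjIota_of_pcond hω h5 h hPγ
        have h1 : ENNReal.ofReal (γ - 1) ≤ gammaIndex (upperConjIota ω) :=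
          ofReal_le_gammaIndex (by linarith) hσγ
        have h2 : ENNReal.ofReal γ = ENNReal.ofReal (γ - 1) + 1 := by
          rw [← ENNReal.ofReal_one, ← ENNReal.ofReal_add (by linarith) zero_le_one]
          norm_num
        rw [h2]
        exact add_le_add_left h1 1
    · have hSne : Set.Nonempty {γ' : ℝ | 0 < γ' ∧ Pcond (upperConjIota ω) γ'} :=
        ⟨γ₀ - 1, ⟨by linarith, hσP₀⟩⟩
      rw [gammaIndex, ENNReal.biSup_add hSne]
      apply iSup₂_le
      intro γ' hmem
      have hPω := pcond_of_pcond_upperConjIota hω h5 hγ₀1 hP₀ hmem.1 hmem.2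
      have h2 : ENNReal.ofReal γ' + 1 = ENNReal.ofReal (γ' + 1) := by
        rw [← ENNReal.ofReal_one, ← ENNReal.ofReal_add hmem.1.le zero_le_one]
      rw [h2]
      exact ofReal_le_gammaIndex (by linarith [hmem.1]) hPω
  refine ⟨h5, hbdd, hω1, heq, ?_⟩
  intro h2
  obtain ⟨γ, hγpos, hPγ, h2γ⟩ := exists_pcond_of_lt h2
  have h2γ' : 2 < γ := by
    have h22 : (2:ENNReal) = ENNReal.ofReal 2 := by norm_num
    rw [h22] at h2γ
    exact (ENNReal.ofReal_lt_ofReal_iff_of_nonneg (by norm_num)).mp h2γ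
  have hσγ := pcond_upperConjIota_of_pcond hω h5 (by linarith) hPγ
  exact snq_of_pcond hσmono hσnn hσtend (by linarith : 1 < γ - 1) hσγ
end

section
/- Let ω ∈ W_0 with associated weight matrix {W^l : l > 0}. The following are equivalent: (i) ω satisfies (ω_7): there exist H ≥ 1 and C > 0 such that ω(t²) ≤ Cω(Ht) + C for all t ≥ 0; (ii) there exist A ≥ 1 and B ≥ 1 such that for all l > 0 there is C_l ≥ 1 with W^l_{2j} ≤ C_l B^j W^{Al}_j for all j ∈ ℕ; (iii) there exist A ≥ 1 and B ≥ 1 such that for all l > 0 there is C_l ≥ 1 with (W^l_j)² ≤ C_l B^j W^{Al}_j for all j ∈ ℕ. Moreover, if any of these conditions holds then γ(ω) = +∞, i.e. condition (P_{ω,γ}) holds for every γ > 0. -/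
open Filter MeasureTheory Set Asymptotics

section AuxOmega

variable {ω : ℝ → ℝ}

lemma InW0.omega_nonneg (hω : InW0 ω) {t : ℝ} (ht : 0 ≤ t) : 0 ≤ ω t := by
  have := hω.1.monotoneOn (Set.mem_Ici.2 le_rfl) (Set.mem_Ici.2 ht) ht
  simpa [hω.1.map_zero] using this

lemma InW0.omega_mono (hω : InW0 ω) {s t : ℝ} (hs : 0 ≤ s) (h : s ≤ t) : ω s ≤ ω t :=
  hω.1.monotoneOn (Set.mem_Ici.2 hs) (Set.mem_Ici.2 (hs.trans h)) h

lemma InW0.phi_nonneg (hω : InW0 ω) (y : ℝ) : 0 ≤ ω (Real.exp y) :=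
  hω.omega_nonneg (Real.exp_pos y).le

lemma InW0.phi_mono (hω : InW0 ω) {y y' : ℝ} (h : y ≤ y') :
    ω (Real.exp y) ≤ ω (Real.exp y') :=
  hω.omega_mono (Real.exp_pos y).le (Real.exp_le_exp.2 h)

lemma InW0.phi_zero (hω : InW0 ω) {y : ℝ} (h : y ≤ 0) : ω (Real.exp y) = 0 :=
  hω.2.1 _ ⟨(Real.exp_pos y).le, Real.exp_le_one_iff.2 h⟩

/-- From `(ω₃)`: eventual log bound. -/
lemma InW0.log_bound (hω : InW0 ω) {ε : ℝ} (hε : 0 < ε) :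
    ∃ T : ℝ, 1 ≤ T ∧ ∀ t, T ≤ t → Real.log t ≤ ε * ω t := by
  have h := hω.2.2.1.def hε
  rw [Filter.eventually_atTop] at h
  obtain ⟨T₀, hT₀⟩ := h
  refine ⟨max T₀ 1, le_max_right _ _, fun t ht => ?_⟩
  have h1 : (1:ℝ) ≤ t := le_trans (le_max_right _ _) ht
  have h2 := hT₀ t (le_trans (le_max_left _ _) ht)
  have hno : 0 ≤ ω t := hω.omega_nonneg (by linarith)
  calc Real.log t ≤ ‖Real.log t‖ := le_abs_self _
    _ ≤ ε * ‖ω t‖ := h2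
    _ = ε * ω t := by rw [Real.norm_eq_abs, abs_of_nonneg hno]

lemma InW0.linear_bound (hω : InW0 ω) :
    ∃ D : ℝ, 0 ≤ D ∧ ∀ y : ℝ, 0 ≤ y → y ≤ ω (Real.exp y) + D := by
  obtain ⟨T, hT1, hT⟩ := hω.log_bound (ε := 1) one_pos
  refine ⟨Real.log T, Real.log_nonneg hT1, fun y hy => ?_⟩
  by_cases hyT : y ≤ Real.log T
  · have := hω.phi_nonneg y; linarith
  · push_neg at hyT
    have hTe : T ≤ Real.exp y := by
      calc T = Real.exp (Real.log T) := (Real.exp_log (by linarith)).symm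
        _ ≤ Real.exp y := Real.exp_le_exp.2 hyT.le
    have := hT _ hTe
    rw [Real.log_exp, one_mul] at this
    have := Real.log_nonneg hT1
    linarith

lemma InW0.phiStar_bddAbove (hω : InW0 ω) {x : ℝ} (hx : 0 ≤ x) :
    BddAbove ((fun y : ℝ => x * y - ω (Real.exp y)) '' Set.Ici 0) := by
  obtain ⟨T, hT1, hT⟩ := hω.log_bound (ε := 1/(2*(x+1))) (by positivity)
  refine ⟨x * Real.log T, ?_⟩
  rintro v ⟨y, hy, rfl⟩
  simp only [Set.mem_Ici] at hy
  have hlogT : 0 ≤ Real.log T := Real.log_nonneg hT1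
  by_cases hyT : y ≤ Real.log T
  · have h1 : x * y ≤ x * Real.log T := mul_le_mul_of_nonneg_left hyT hx
    have := hω.phi_nonneg y; simp only; linarith
  · push_neg at hyT
    have hTe : T ≤ Real.exp y := by
      calc T = Real.exp (Real.log T) := (Real.exp_log (by linarith)).symm
        _ ≤ Real.exp y := Real.exp_le_exp.2 hyT.le
    have h2 := hT _ hTe
    rw [Real.log_exp] at h2
    have hno : 0 ≤ ω (Real.exp y) := hω.phi_nonneg y
    have hxy : x * y ≤ x * ((1/(2*(x+1))) * ω (Real.exp y)) :=
      mul_le_mul_of_nonneg_left h2 hx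
    have hfac : x * (1/(2*(x+1))) ≤ 1 := by
      rw [mul_one_div, div_le_one (by positivity)]; linarith
    have : x * ((1/(2*(x+1))) * ω (Real.exp y)) ≤ 1 * ω (Real.exp y) := by
      rw [← mul_assoc]
      exact mul_le_mul_of_nonneg_right hfac hno
    have hxlog : 0 ≤ x * Real.log T := mul_nonneg hx hlogT
    simp only; linarith

lemma phiStar_nonempty (ω : ℝ → ℝ) (x : ℝ) :
    ((fun y : ℝ => x * y - ω (Real.exp y)) '' Set.Ici 0).Nonempty :=
  ⟨_, 0, Set.mem_Ici.2 le_rfl, rfl⟩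

lemma InW0.phiStar_le (hω : InW0 ω) {x M : ℝ}
    (h : ∀ y : ℝ, 0 ≤ y → x * y - ω (Real.exp y) ≤ M) : phiStar ω x ≤ M := by
  refine csSup_le (phiStar_nonempty ω x) ?_
  rintro v ⟨y, hy, rfl⟩
  exact h y hy

lemma InW0.fenchel (hω : InW0 ω) {x : ℝ} (hx : 0 ≤ x) (y : ℝ) :
    x * y - ω (Real.exp y) ≤ phiStar ω x := by
  rcases le_or_gt 0 y with hy | hy
  · exact le_csSup (hω.phiStar_bddAbove hx) ⟨y, Set.mem_Ici.2 hy, rfl⟩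
  · have h1 : x * y ≤ 0 := mul_nonpos_of_nonneg_of_nonpos hx hy.le
    have h2 : ω (Real.exp y) = 0 := hω.phi_zero hy.le
    have h3 : x * 0 - ω (Real.exp 0) ≤ phiStar ω x :=
      le_csSup (hω.phiStar_bddAbove hx) ⟨0, Set.mem_Ici.2 le_rfl, rfl⟩
    have h4 : ω (Real.exp 0) = 0 := by
      rw [Real.exp_zero]; exact hω.2.1 1 ⟨zero_le_one, le_rfl⟩
    rw [h4, mul_zero, sub_zero] at h3
    linarith

lemma InW0.phiStar_nonneg (hω : InW0 ω) {x : ℝ} (hx : 0 ≤ x) : 0 ≤ phiStar ω x := by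
  have := hω.fenchel hx 0
  have h4 : ω (Real.exp 0) = 0 := by
    rw [Real.exp_zero]; exact hω.2.1 1 ⟨zero_le_one, le_rfl⟩
  rw [h4, mul_zero, sub_zero] at this
  exact this

lemma InW0.phiStar_mono (hω : InW0 ω) {x x' : ℝ} (hx : 0 ≤ x) (h : x ≤ x') :
    phiStar ω x ≤ phiStar ω x' := by
  refine hω.phiStar_le fun y hy => ?_
  have h1 : x * y ≤ x' * y := mul_le_mul_of_nonneg_right h hy
  have h2 := hω.fenchel (hx.trans h) y
  linarith

lemma InW0.phiStar_scale (hω : InW0 ω) {l l' s : ℝ} (hl : 0 < l) (hll : l ≤ l')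
    (hs : 0 ≤ s) : (1/l) * phiStar ω (l * s) ≤ (1/l') * phiStar ω (l' * s) := by
  have hl' : 0 < l' := lt_of_lt_of_le hl hll
  have key : phiStar ω (l * s) ≤ (l/l') * phiStar ω (l' * s) := by
    refine hω.phiStar_le fun y hy => ?_
    have hf := hω.fenchel (x := l' * s) (by positivity) y
    have hmul : (l/l') * (l' * s * y - ω (Real.exp y)) ≤ (l/l') * phiStar ω (l' * s) :=
      mul_le_mul_of_nonneg_left hf (by positivity)
    have hid : (l/l') * (l' * s * y) = l * s * y := by field_simp
    have hphipos := hω.phi_nonneg y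
    have hfrac1 : l/l' ≤ 1 := (div_le_one hl').2 hll
    nlinarith [mul_le_mul_of_nonneg_right hfrac1 hphipos]
  calc (1/l) * phiStar ω (l * s) ≤ (1/l) * ((l/l') * phiStar ω (l' * s)) :=
        mul_le_mul_of_nonneg_left key (by positivity)
    _ = (1/l') * phiStar ω (l' * s) := by field_simp

/-- Supporting-line lemma for the convex function `φ = ω ∘ exp`. -/
lemma InW0.support (hω : InW0 ω) (z : ℝ) :
    ∃ x₀ : ℝ, 0 ≤ x₀ ∧ ∀ y : ℝ, x₀ * y - ω (Real.exp y) ≤ x₀ * z - ω (Real.exp z) := by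
  have hconv : ConvexOn ℝ Set.univ (fun t : ℝ => ω (Real.exp t)) := hω.2.2.2
  set φ : ℝ → ℝ := fun t : ℝ => ω (Real.exp t) with hφdef
  set S : Set ℝ := (fun y => (φ z - φ y)/(z - y)) '' Set.Iio z with hSdef
  have hne : S.Nonempty := ⟨_, z - 1, by simp, rfl⟩
  have hslope : ∀ y ∈ Set.Iio z, (φ z - φ y)/(z - y) ≤ φ (z+1) - φ z := by
    intro y hy
    have := hconv.slope_mono_adjacent (Set.mem_univ y) (Set.mem_univ (z+1))
      (Set.mem_Iio.1 hy) (by linarith)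
    simpa using this
  have hbdd : BddAbove S := by
    refine ⟨φ (z+1) - φ z, ?_⟩
    rintro v ⟨y, hy, rfl⟩
    exact hslope y hy
  refine ⟨sSup S, ?_, ?_⟩
  · have hmem : (φ z - φ (z-1))/(z - (z-1)) ∈ S := ⟨z-1, by simp, rfl⟩
    have hpos : 0 ≤ (φ z - φ (z-1))/(z - (z-1)) := by
      have := hω.phi_mono (show z - 1 ≤ z by linarith)
      have hz : z - (z-1) = 1 := by ring
      rw [hz, div_one]
      simpa [hφdef] using sub_nonneg.2 this
    exact hpos.trans (le_csSup hbdd hmem)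
  · intro y
    rcases lt_trichotomy y z with hy | hy | hy
    · have hmem : (φ z - φ y)/(z - y) ∈ S := ⟨y, hy, rfl⟩
      have h1 : (φ z - φ y)/(z - y) ≤ sSup S := le_csSup hbdd hmem
      rw [div_le_iff₀ (by linarith : (0:ℝ) < z - y)] at h1
      have h2 : ω (Real.exp z) - ω (Real.exp y) ≤ sSup S * (z - y) := by
        simpa [hφdef] using h1
      nlinarith
    · subst hy; exact le_rfl
    · have h1 : sSup S ≤ (φ y - φ z)/(y - z) := by
        refine csSup_le hne ?_
        rintro v ⟨y', hy', rfl⟩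
        have := hconv.slope_mono_adjacent (Set.mem_univ y') (Set.mem_univ y)
          (Set.mem_Iio.1 hy') hy
        simpa using this
      rw [le_div_iff₀ (by linarith : (0:ℝ) < y - z)] at h1
      have h2 : sSup S * (y - z) ≤ ω (Real.exp y) - ω (Real.exp z) := by
        simpa [hφdef] using h1
      nlinarith

end AuxOmega

section AuxW

variable {ω : ℝ → ℝ}

lemma Wseq_pos (ω : ℝ → ℝ) (l : ℝ) (j : ℕ) : 0 < Wseq ω l j := Real.exp_pos _

lemma Wseq_double {l : ℝ} (hl : 0 < l) (j : ℕ) :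
    Wseq ω l (2 * j) = Wseq ω (2 * l) j ^ 2 := by
  unfold Wseq
  rw [← Real.exp_nat_mul]
  congr 1
  have harg : l * ((2 * j : ℕ) : ℝ) = (2 * l) * (j : ℝ) := by push_cast; ring
  rw [harg]
  have hl' : l ≠ 0 := ne_of_gt hl
  push_cast
  field_simp

lemma Wseq_mono_l (hω : InW0 ω) {l l' : ℝ} (hl : 0 < l) (hll : l ≤ l') (j : ℕ) :
    Wseq ω l j ≤ Wseq ω l' j :=
  Real.exp_le_exp.2 (hω.phiStar_scale hl hll (Nat.cast_nonneg j))

/-- Condition (i), `(ω₇)`. -/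
def CondI (ω : ℝ → ℝ) : Prop :=
  ∃ H : ℝ, 1 ≤ H ∧ ∃ C : ℝ, 0 < C ∧ ∀ t : ℝ, 0 ≤ t → ω (t ^ 2) ≤ C * ω (H * t) + C

/-- Condition (ii). -/
def CondII (ω : ℝ → ℝ) : Prop :=
  ∃ A B : ℝ, 1 ≤ A ∧ 1 ≤ B ∧ ∀ l : ℝ, 0 < l → ∃ Cl : ℝ, 1 ≤ Cl ∧
    ∀ j : ℕ, Wseq ω l (2 * j) ≤ Cl * B ^ j * Wseq ω (A * l) j

/-- Condition (iii). -/
def CondIII (ω : ℝ → ℝ) : Prop :=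
  ∃ A B : ℝ, 1 ≤ A ∧ 1 ≤ B ∧ ∀ l : ℝ, 0 < l → ∃ Cl : ℝ, 1 ≤ Cl ∧
    ∀ j : ℕ, (Wseq ω l j) ^ 2 ≤ Cl * B ^ j * Wseq ω (A * l) j

lemma condI_to_III (hω : InW0 ω) (h : CondI ω) : CondIII ω := by
  obtain ⟨H, hH, C, hC, h7⟩ := h
  set C₂ : ℝ := max C 2 with hC₂def
  have hC₂2 : (2:ℝ) ≤ C₂ := le_max_right _ _
  have hC₂pos : (0:ℝ) < C₂ := by linarith
  have hCC₂ : C ≤ C₂ := le_max_left _ _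
  set h₀ : ℝ := Real.log H with hh₀def
  have hh₀ : 0 ≤ h₀ := Real.log_nonneg hH
  -- φ(2y) ≤ C₂ φ(y + h₀) + C₂
  have hω7' : ∀ y : ℝ, ω (Real.exp (2 * y)) ≤ C₂ * ω (Real.exp (y + h₀)) + C₂ := by
    intro y
    have h1 := h7 (Real.exp y) (Real.exp_pos y).le
    have h2 : Real.exp y ^ 2 = Real.exp (2 * y) := by
      rw [← Real.exp_nat_mul]; norm_num
    have h3 : H * Real.exp y = Real.exp (y + h₀) := by
      rw [Real.exp_add, hh₀def, Real.exp_log (by linarith : (0:ℝ) < H)]; ring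
    rw [h2, h3] at h1
    have hno : 0 ≤ ω (Real.exp (y + h₀)) := hω.phi_nonneg _
    nlinarith
  set A : ℝ := C₂ / 2 with hAdef
  have hA1 : (1:ℝ) ≤ A := by rw [hAdef]; linarith
  -- key: phiStar x ≤ (P + C₂ x h₀ + C₂)/C₂ where P = phiStar (A x)
  have key : ∀ x : ℝ, 0 ≤ x →
      phiStar ω x ≤ (phiStar ω (A * x) + C₂ * x * h₀ + C₂) / C₂ := by
    intro x hx
    refine hω.phiStar_le fun y hy => ?_
    rw [le_div_iff₀ hC₂pos]
    have h1 := hω7' (y - h₀)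
    have hf := hω.fenchel (x := A * x) (by positivity) (2 * (y - h₀))
    have harg : (y - h₀) + h₀ = y := by ring
    rw [harg] at h1
    have hAx : A * x * (2 * (y - h₀)) = C₂ * x * y - C₂ * x * h₀ := by
      rw [hAdef]; ring
    rw [hAx] at hf
    nlinarith
  refine ⟨A, Real.exp (2 * h₀), hA1, Real.one_le_exp (by linarith), fun l hl => ?_⟩
  refine ⟨Real.exp (2 / l), Real.one_le_exp (by positivity), fun j => ?_⟩
  have hx : (0:ℝ) ≤ l * j := by positivity
  have hkey := key (l * j) hx
  -- exponent inequality
  have hexp : (2/l) * phiStar ω (l * j) ≤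
      2/l + (j : ℝ) * (2 * h₀) + (1/(A*l)) * phiStar ω (A * l * (j:ℝ)) := by
    have hAl : A * (l * (j:ℝ)) = A * l * (j:ℝ) := by ring
    rw [hAl] at hkey
    have hmul : (2/l) * phiStar ω (l * j) ≤
        (2/l) * ((phiStar ω (A * l * (j:ℝ)) + C₂ * (l * j) * h₀ + C₂) / C₂) :=
      mul_le_mul_of_nonneg_left hkey (by positivity)
    have hid : (2/l) * ((phiStar ω (A * l * (j:ℝ)) + C₂ * (l * j) * h₀ + C₂) / C₂) =
        2/l + (j : ℝ) * (2 * h₀) + (1/(A*l)) * phiStar ω (A * l * (j:ℝ)) := by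
      rw [hAdef]
      field_simp
      ring
    rw [hid] at hmul
    exact hmul
  -- conclude at exp level
  have lhs_eq : (Wseq ω l j) ^ 2 = Real.exp ((2/l) * phiStar ω (l * j)) := by
    unfold Wseq
    rw [← Real.exp_nat_mul]
    congr 1
    push_cast
    ring
  have rhs_eq : Real.exp (2/l) * Real.exp (2 * h₀) ^ j * Wseq ω (A * l) j =
      Real.exp (2/l + (j:ℝ) * (2 * h₀) + (1/(A*l)) * phiStar ω (A * l * (j:ℝ))) := by
    unfold Wseq
    rw [← Real.exp_nat_mul, ← Real.exp_add, ← Real.exp_add]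
  rw [lhs_eq, rhs_eq]
  exact Real.exp_le_exp.2 hexp

lemma condIII_to_II (hω : InW0 ω) (h : CondIII ω) : CondII ω := by
  obtain ⟨A, B, hA, hB, h3⟩ := h
  refine ⟨2 * A, B, by linarith, hB, fun l hl => ?_⟩
  obtain ⟨Cl, hCl, hCl2⟩ := h3 (2 * l) (by linarith)
  refine ⟨Cl, hCl, fun j => ?_⟩
  have h1 := hCl2 j
  rw [Wseq_double hl j]
  have hA2 : A * (2 * l) = 2 * A * l := by ring
  rw [hA2] at h1
  exact h1

lemma condII_to_III (hω : InW0 ω) (h : CondII ω) : CondIII ω := by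
  obtain ⟨A, B, hA, hB, h2⟩ := h
  refine ⟨A, B, hA, hB, fun l hl => ?_⟩
  obtain ⟨Cl, hCl, hCl2⟩ := h2 (l / 2) (by linarith)
  refine ⟨Cl, hCl, fun j => ?_⟩
  have h1 := hCl2 j
  have hdl : 2 * (l / 2) = l := by ring
  rw [Wseq_double (by linarith : (0:ℝ) < l/2) j, hdl] at h1
  refine h1.trans ?_
  have hmono : Wseq ω (A * (l/2)) j ≤ Wseq ω (A * l) j :=
    Wseq_mono_l hω (by positivity) (by nlinarith) j
  have hpos : (0:ℝ) ≤ Cl * B ^ j := by positivity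
  exact mul_le_mul_of_nonneg_left hmono hpos

end AuxW

section AuxMain

variable {ω : ℝ → ℝ}

lemma condIII_to_I (hω : InW0 ω) (h : CondIII ω) : CondI ω := by
  obtain ⟨A, B, hA, hB, h3⟩ := h
  have hA0 : (0:ℝ) < A := by linarith
  obtain ⟨C₁, hC₁, hC⟩ := h3 1 one_pos
  set c₁ : ℝ := Real.log C₁ with hc₁def
  have hc₁ : 0 ≤ c₁ := Real.log_nonneg hC₁
  set b : ℝ := Real.log B / 2 with hbdef
  have hb : 0 ≤ b := by
    rw [hbdef]; have := Real.log_nonneg hB; linarith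
  -- logarithmic form of the hypothesis at l = 1
  have hlog : ∀ j : ℕ, 2 * phiStar ω (j : ℝ) ≤
      c₁ + (j : ℝ) * (2 * b) + (1/A) * phiStar ω (A * (j : ℝ)) := by
    intro j
    have h1 := hC j
    have lhs_eq : (Wseq ω 1 j) ^ 2 = Real.exp (2 * phiStar ω (j : ℝ)) := by
      unfold Wseq
      rw [← Real.exp_nat_mul]
      congr 1
      push_cast
      ring
    have rhs_eq : C₁ * B ^ j * Wseq ω (A * 1) j =
        Real.exp (c₁ + (j:ℝ) * (2 * b) + (1/A) * phiStar ω (A * (j:ℝ))) := by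
      unfold Wseq
      rw [mul_one A, Real.exp_add, Real.exp_add]
      have hB0 : (0:ℝ) < B := by linarith
      have e1 : Real.exp c₁ = C₁ := Real.exp_log (by linarith)
      have e2 : Real.exp ((j:ℝ) * (2 * b)) = B ^ j := by
        rw [hbdef]
        have h2b : (j:ℝ) * (2 * (Real.log B / 2)) = (j:ℝ) * Real.log B := by ring
        rw [h2b, Real.exp_nat_mul, Real.exp_log hB0]
      rw [e1, e2]
    rw [lhs_eq, rhs_eq] at h1
    exact Real.exp_le_exp.1 h1
  obtain ⟨D, hD, hDb⟩ := hω.linear_bound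
  -- main estimate: φ(2y) ≤ 4A φ(y+b) + (2AD + A c₁) for y ≥ 0
  have main : ∀ y : ℝ, 0 ≤ y →
      ω (Real.exp (2 * y)) ≤ 4 * A * ω (Real.exp (y + b)) + (2 * A * D + A * c₁) := by
    intro y hy
    obtain ⟨x₀, hx₀, hsupp⟩ := hω.support (2 * y)
    have hstar : phiStar ω x₀ ≤ x₀ * (2 * y) - ω (Real.exp (2 * y)) :=
      hω.phiStar_le fun y' _ => hsupp y'
    set j : ℕ := ⌊x₀ / A⌋₊ with hjdef
    have hj1 : A * (j : ℝ) ≤ x₀ := by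
      have hfl := Nat.floor_le (by positivity : (0:ℝ) ≤ x₀ / A)
      calc A * (j:ℝ) ≤ A * (x₀ / A) := mul_le_mul_of_nonneg_left hfl hA0.le
        _ = x₀ := by field_simp
    have hj2 : x₀ ≤ A * ((j : ℝ) + 1) := by
      have hfl := (Nat.lt_floor_add_one (x₀ / A)).le
      calc x₀ = A * (x₀ / A) := by field_simp
        _ ≤ A * ((j:ℝ) + 1) := mul_le_mul_of_nonneg_left hfl hA0.le
    have hmono : phiStar ω (A * (j:ℝ)) ≤ phiStar ω x₀ :=
      hω.phiStar_mono (by positivity) hj1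
    have hlogj := hlog j
    have hlow : 2 * A * phiStar ω (j:ℝ) - A * c₁ - A * ((j:ℝ) * (2*b)) ≤
        phiStar ω (A * (j:ℝ)) := by
      have h2 : A * (2 * phiStar ω (j:ℝ)) ≤
          A * (c₁ + (j:ℝ) * (2*b) + (1/A) * phiStar ω (A * (j:ℝ))) :=
        mul_le_mul_of_nonneg_left hlogj hA0.le
      have h3 : A * ((1/A) * phiStar ω (A * (j:ℝ))) = phiStar ω (A * (j:ℝ)) := by
        field_simp
      nlinarith
    have hfen := hω.fenchel (x := (j:ℝ)) (Nat.cast_nonneg j) (y + b)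
    have hylin : y ≤ ω (Real.exp (y + b)) + D := by
      have h1 := hDb y hy
      have h2 : ω (Real.exp y) ≤ ω (Real.exp (y + b)) := hω.phi_mono (by linarith)
      linarith
    have hxy : x₀ * (2 * y) ≤ A * ((j:ℝ) + 1) * (2 * y) := by
      have h2y : (0:ℝ) ≤ 2 * y := by linarith
      exact mul_le_mul_of_nonneg_right hj2 h2y
    nlinarith [hω.phi_nonneg (y + b), Nat.cast_nonneg (α := ℝ) j]
  -- conclude (ω₇)
  set H : ℝ := Real.exp b with hHdef
  have hH1 : 1 ≤ H := Real.one_le_exp hb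
  set C' : ℝ := 4 * A + 2 * A * D + A * c₁ + 1 with hC'def
  have hC'pos : 0 < C' := by positivity
  refine ⟨H, hH1, C', hC'pos, fun t ht => ?_⟩
  rcases lt_or_ge t 1 with ht1 | ht1
  · have hsq : t ^ 2 ≤ 1 := by nlinarith
    have h0 : ω (t ^ 2) = 0 := hω.2.1 _ ⟨by positivity, hsq⟩
    have h1 : 0 ≤ ω (H * t) := hω.omega_nonneg (by positivity)
    rw [h0]
    nlinarith
  · have ht0 : (0:ℝ) < t := by linarith
    set y : ℝ := Real.log t with hydef
    have hy0 : 0 ≤ y := Real.log_nonneg ht1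
    have e1 : t ^ 2 = Real.exp (2 * y) := by
      rw [hydef, two_mul, Real.exp_add, Real.exp_log ht0]; ring
    have e2 : H * t = Real.exp (y + b) := by
      rw [hHdef, hydef, Real.exp_add, Real.exp_log ht0]; ring
    have hm := main y hy0
    rw [e1, e2]
    have hno : 0 ≤ ω (Real.exp (y + b)) := hω.phi_nonneg _
    rw [hC'def]
    nlinarith [mul_nonneg (mul_nonneg hA0.le hD) hno, mul_nonneg (mul_nonneg hA0.le hc₁) hno,
      mul_nonneg hA0.le hno]

lemma condI_to_gamma (hω : InW0 ω) (h : CondI ω) :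
    gammaIndex ω = ⊤ ∧ ∀ γ : ℝ, 0 < γ → Pcond ω γ := by
  obtain ⟨H, hH, C, hC, h7⟩ := h
  have hP : ∀ γ : ℝ, 0 < γ → Pcond ω γ := by
    intro γ hγ
    set K : ℝ := C ^ 2 + 2 with hKdef
    have hK1 : 1 < K := by nlinarith
    refine ⟨K, hK1, C ^ 2 + 1, by rw [hKdef]; linarith, ?_⟩
    set M : ℝ := max (max (K ^ γ) (H ^ 3)) 1 with hMdef
    have hMev : ∀ᶠ t : ℝ in Filter.atTop, M ≤ t ∧ C ^ 2 + C + 1 ≤ ω t := by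
      refine (Filter.eventually_ge_atTop M).and ?_
      exact hω.1.tendsto_atTop.eventually_ge_atTop _
    filter_upwards [hMev] with t hMt
    obtain ⟨htM, hωt⟩ := hMt
    have ht1 : (1:ℝ) ≤ t := le_trans (le_max_right _ _) htM
    have ht0 : (0:ℝ) < t := by linarith
    have htK : K ^ γ ≤ t := le_trans (le_trans (le_max_left _ _) (le_max_left _ _)) htM
    have htH : H ^ 3 ≤ t := le_trans (le_trans (le_max_right _ _) (le_max_left _ _)) htM
    have hKpos : (0:ℝ) < K ^ γ := Real.rpow_pos_of_pos (by nlinarith) γ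
    have s1 : ω (K ^ γ * t) ≤ ω (t ^ 2) := by
      refine hω.omega_mono (by positivity) ?_
      have hh : K ^ γ * t ≤ t * t := mul_le_mul_of_nonneg_right htK ht0.le
      nlinarith
    have s2 := h7 t ht0.le
    have s3 : ω (H * t) ≤ C * ω t + C := by
      set s : ℝ := Real.sqrt (H * t) with hsdef
      have hHt0 : (0:ℝ) ≤ H * t := by positivity
      have hs2 : s ^ 2 = H * t := Real.sq_sqrt hHt0
      have hs0 : 0 ≤ s := Real.sqrt_nonneg _
      have hHs : H * s ≤ t := by
        have hsq : (H * s) ^ 2 ≤ t ^ 2 := by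
          have he : (H * s) ^ 2 = H ^ 2 * (H * t) := by rw [mul_pow, hs2]
          rw [he]
          calc H ^ 2 * (H * t) = H ^ 3 * t := by ring
            _ ≤ t * t := mul_le_mul_of_nonneg_right htH ht0.le
            _ = t ^ 2 := by ring
        exact (pow_le_pow_iff_left₀ (by positivity) ht0.le two_ne_zero).1 hsq
      have h1 := h7 s hs0
      rw [hs2] at h1
      have h2 : ω (H * s) ≤ ω t := hω.omega_mono (by positivity) hHs
      nlinarith
    -- combine
    have hcomb : ω (K ^ γ * t) ≤ C ^ 2 * ω t + C ^ 2 + C := by nlinarith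
    have hωtpos : (0:ℝ) < ω t := by nlinarith
    rw [div_le_iff₀ hωtpos]
    nlinarith
  refine ⟨?_, hP⟩
  rw [gammaIndex, eq_top_iff, ← ENNReal.iSup_natCast]
  refine iSup_le fun n => ?_
  have hmem : ((n:ℝ) + 1) ∈ {γ : ℝ | 0 < γ ∧ Pcond ω γ} := by
    refine ⟨by positivity, hP _ (by positivity)⟩
  refine le_trans ?_ (le_iSup₂_of_le ((n:ℝ)+1) hmem le_rfl)
  rw [← ENNReal.ofReal_natCast n]
  exact ENNReal.ofReal_le_ofReal (by linarith)

end AuxMain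

/-- Appendix, Lemma on `(ω₇)`: characterizations of `(ω₇)` in
terms of the associated weight matrix, and `γ(ω) = +∞` as consequence. -/
theorem omega7_characterization
    (ω : ℝ → ℝ) (hω : InW0 ω) :
    ((∃ H : ℝ, 1 ≤ H ∧ ∃ C : ℝ, 0 < C ∧
        ∀ t : ℝ, 0 ≤ t → ω (t ^ 2) ≤ C * ω (H * t) + C) ↔
      (∃ A B : ℝ, 1 ≤ A ∧ 1 ≤ B ∧ ∀ l : ℝ, 0 < l → ∃ Cl : ℝ, 1 ≤ Cl ∧
        ∀ j : ℕ, Wseq ω l (2 * j) ≤ Cl * B ^ j * Wseq ω (A * l) j)) ∧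
    ((∃ H : ℝ, 1 ≤ H ∧ ∃ C : ℝ, 0 < C ∧
        ∀ t : ℝ, 0 ≤ t → ω (t ^ 2) ≤ C * ω (H * t) + C) ↔
      (∃ A B : ℝ, 1 ≤ A ∧ 1 ≤ B ∧ ∀ l : ℝ, 0 < l → ∃ Cl : ℝ, 1 ≤ Cl ∧
        ∀ j : ℕ, (Wseq ω l j) ^ 2 ≤ Cl * B ^ j * Wseq ω (A * l) j)) ∧
    ((∃ H : ℝ, 1 ≤ H ∧ ∃ C : ℝ, 0 < C ∧
        ∀ t : ℝ, 0 ≤ t → ω (t ^ 2) ≤ C * ω (H * t) + C) →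
      gammaIndex ω = ⊤ ∧ ∀ γ : ℝ, 0 < γ → Pcond ω γ) := by
  refine ⟨⟨fun h => condIII_to_II hω (condI_to_III hω h),
      fun h => condIII_to_I hω (condII_to_III hω h)⟩,
    ⟨fun h => condI_to_III hω h, fun h => condIII_to_I hω h⟩,
    fun h => condI_to_gamma hω h⟩
end
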